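/- (Eisenstein-type integrality) Let K be a number field with ring of integers O_K, and let y = Σ a_n x^n ∈ K[[x]] be a formal power series algebraic over K(x) (satisfying a polynomial P(x, y) = 0 with P ∈ K[x, y], ∂P/∂y(0, a_0) ≠ 0). Then there exists a nonzero integer D such that D^{n+1} a_n ∈ O_K for all n; in particular, for all but finitely many primes p of O_K, all coefficients a_n are p-integral. -/

import Mathlib

open Polynomial PowerSeries Finset

private lemma int_coeff_mul' {K : Type*} [CommRing K] {f g : K⟦X⟧}
    (hf : ∀ k, IsIntegral ℤ ((PowerSeries.coeff k) f))
    (hg : ∀ k, IsIntegral ℤ ((PowerSeries.coeff k) g)) :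
    ∀ k, IsIntegral ℤ ((PowerSeries.coeff k) (f * g)) := by
  intro k
  rw [PowerSeries.coeff_mul]
  exact (integralClosure ℤ K).sum_mem fun p _ => mul_mem (hf p.1) (hg p.2)

private lemma int_coeff_pow' {K : Type*} [CommRing K] {f : K⟦X⟧}
    (hf : ∀ k, IsIntegral ℤ ((PowerSeries.coeff k) f)) (j : ℕ) :
    ∀ k, IsIntegral ℤ ((PowerSeries.coeff k) (f ^ j)) := by
  induction j with
  | zero =>
    intro k
    rw [pow_zero, PowerSeries.coeff_one]
    split <;> simp [isIntegral_one, isIntegral_zero]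
  | succ j ih =>
    rw [pow_succ]
    exact int_coeff_mul' ih hf

private lemma exists_den' (K : Type*) [Field K] [NumberField K] (s : Finset K) :
    ∃ u : ℤ, u ≠ 0 ∧ ∀ x ∈ s, IsIntegral ℤ ((u : K) * x) := by
  obtain ⟨y, hy, h⟩ := exists_integral_multiples ℤ ℚ s
  exact ⟨y, hy, fun x hx => by simpa [zsmul_eq_mul] using h x hx⟩

/-- Eisenstein-type integrality: let `K` be a number field and `y = Σ a_n xⁿ ∈ K[[x]]`
a power series algebraic over `K(x)`, satisfying `P(x, y) = 0` for a nonzero polynomial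
`P ∈ K[x][Y]` with `∂P/∂Y(0, a_0) ≠ 0`.  Then there is a nonzero integer `D` such that
`D^{n+1} a_n` is integral (lies in `O_K`) for all `n`; in particular all but finitely
many primes of `O_K` are such that every `a_n` is integral at them. -/
theorem eisenstein_integrality
    (K : Type*) [Field K] [NumberField K]
    (y : PowerSeries K) (P : Polynomial (Polynomial K)) (hP : P ≠ 0)
    (halg : Polynomial.eval₂ (Polynomial.coeToPowerSeries.ringHom) y P = 0)
    (hsimple : (Polynomial.eval (Polynomial.C ((PowerSeries.coeff 0) y))
        (Polynomial.derivative P)).eval 0 ≠ 0) :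
    ∃ D : ℤ, D ≠ 0 ∧
      ∀ n : ℕ, IsIntegral ℤ ((D : K) ^ (n + 1) * (PowerSeries.coeff n) y) := by
  classical
  set φ : Polynomial K →+* K⟦X⟧ := Polynomial.coeToPowerSeries.ringHom with hφ
  set a₀ : K := (PowerSeries.coeff 0) y with ha₀
  set c : K := (Polynomial.eval (Polynomial.C a₀) (Polynomial.derivative P)).eval 0 with hcdef
  have hc : c ≠ 0 := hsimple
  set P₁ : Polynomial (Polynomial K) :=
    P.comp (Polynomial.X + Polynomial.C (Polynomial.C a₀)) with hP₁
  set Yb : K⟦X⟧ := y - PowerSeries.C a₀ with hYb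
  have hYb0 : (PowerSeries.coeff 0) Yb = 0 := by
    simp [hYb, ha₀]
  have halg1 : Polynomial.eval₂ φ Yb P₁ = 0 := by
    rw [hP₁, Polynomial.eval₂_comp]
    have : Polynomial.eval₂ φ Yb (Polynomial.X + Polynomial.C (Polynomial.C a₀)) = y := by
      rw [Polynomial.eval₂_add, Polynomial.eval₂_X, Polynomial.eval₂_C]
      rw [hφ, Polynomial.coeToPowerSeries.ringHom_apply, Polynomial.coe_C, hYb]
      ring
    rw [this]
    exact halg
  -- the key coefficient `c` as a coefficient of `P₁`
  have hd : Polynomial.derivative P₁ =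
      (Polynomial.derivative P).comp (Polynomial.X + Polynomial.C (Polynomial.C a₀)) := by
    rw [hP₁, Polynomial.derivative_comp]
    simp
  have e1 : (Polynomial.derivative P₁).coeff 0 = P₁.coeff 1 := by
    simp [Polynomial.coeff_derivative]
  have e2 : (Polynomial.derivative P₁).coeff 0
      = (Polynomial.derivative P).eval (Polynomial.C a₀) := by
    rw [Polynomial.coeff_zero_eq_eval_zero, hd, Polynomial.eval_comp]
    simp
  have hq10 : (P₁.coeff 1).coeff 0 = c := by
    rw [← e1, e2, Polynomial.coeff_zero_eq_eval_zero, hcdef]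
  -- clear denominators
  obtain ⟨u, hu0, hq, hua⟩ : ∃ u : ℤ, u ≠ 0 ∧
      (∀ j i, IsIntegral ℤ ((u:K) * (P₁.coeff j).coeff i)) ∧ IsIntegral ℤ ((u:K) * a₀) := by
    obtain ⟨u, hu0', hu⟩ := exists_den' K
      (insert a₀ (P₁.support.biUnion fun j =>
        ((P₁.coeff j).support.image fun i => (P₁.coeff j).coeff i)))
    refine ⟨u, hu0', fun j i => ?_, hu a₀ (Finset.mem_insert_self _ _)⟩
    by_cases h : (P₁.coeff j).coeff i = 0
    · simpa [h] using isIntegral_zero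
    · refine hu _ (Finset.mem_insert_of_mem (Finset.mem_biUnion.mpr
        ⟨j, ?_, Finset.mem_image_of_mem _ ?_⟩))
      · exact Polynomial.mem_support_iff.mpr (fun hj => h (by simp [hj]))
      · exact Polynomial.mem_support_iff.mpr h
  have huK : (u:K) ≠ 0 := Int.cast_ne_zero.mpr hu0
  have huint : IsIntegral ℤ ((u:K)) := by
    simpa using isIntegral_algebraMap (R := ℤ) (A := K) (x := u)
  set γ : K := (u:K) * c with hγdef
  have hγint : IsIntegral ℤ γ := by rw [hγdef, ← hq10]; exact hq 1 0
  have hγ0 : γ ≠ 0 := mul_ne_zero huK hc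
  set t : K := γ^2 * (u:K) with htdef
  have htint : IsIntegral ℤ t := by rw [htdef]; exact (hγint.pow 2).mul huint
  have ht0 : t ≠ 0 := by rw [htdef]; exact mul_ne_zero (pow_ne_zero _ hγ0) huK
  set Q : Polynomial (K⟦X⟧) := P₁.map φ with hQdef
  have hQeval : Q.eval Yb = 0 := by rw [hQdef, Polynomial.eval_map]; exact halg1
  -- main claim, by strong induction
  have CL : ∀ n : ℕ, IsIntegral ℤ ((c * (u:K))⁻¹ * t ^ n * (PowerSeries.coeff n) Yb) := by
    intro n
    induction n using Nat.strong_induction_on with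
    | _ n IH =>
    cases n with
    | zero =>
      rw [hYb0, mul_zero]
      exact isIntegral_zero
    | succ n =>
      set N := n + 1 with hN
      set T : K⟦X⟧ := ((PowerSeries.trunc N Yb : Polynomial K) : K⟦X⟧) with hTdef
      set R : K⟦X⟧ := Yb - T with hRdef
      have hTco : ∀ k, (PowerSeries.coeff k) T
          = if k < N then (PowerSeries.coeff k) Yb else 0 := by
        intro k
        rw [hTdef, Polynomial.coeff_coe, PowerSeries.coeff_trunc]
      have hRco : ∀ k < N, (PowerSeries.coeff k) R = 0 := by
        intro k hk
        rw [hRdef, map_sub, hTco k, if_pos hk, sub_self]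
      have hRN : (PowerSeries.coeff N) R = (PowerSeries.coeff N) Yb := by
        rw [hRdef, map_sub, hTco N, if_neg (lt_irrefl N), sub_zero]
      have hT0 : (PowerSeries.constantCoeff) T = 0 := by
        rw [← PowerSeries.coeff_zero_eq_constantCoeff_apply, hTco 0,
          if_pos (Nat.succ_pos n), hYb0]
      -- Taylor expansion of the polynomial identity
      obtain ⟨kk, hkk⟩ := Q.binomExpansion T R
      have hTR : T + R = Yb := by rw [hRdef]; ring
      rw [hTR, hQeval] at hkk
      have hco := congrArg (PowerSeries.coeff N) hkk
      rw [map_add, map_add, map_zero] at hco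
      -- the linear term
      have hconst : (PowerSeries.coeff 0) ((Polynomial.derivative Q).eval T) = c := by
        rw [PowerSeries.coeff_zero_eq_constantCoeff_apply]
        have h1 : (Polynomial.derivative Q).eval T
            = Polynomial.eval₂ (RingHom.id _) T (Polynomial.derivative Q) := rfl
        rw [h1, Polynomial.hom_eval₂, RingHom.comp_id, hT0, Polynomial.eval₂_at_zero]
        rw [hQdef, Polynomial.derivative_map, Polynomial.coeff_map]
        rw [hφ, Polynomial.coeToPowerSeries.ringHom_apply, Polynomial.constantCoeff_coe]
        rw [e1, hq10]
      have hmul : (PowerSeries.coeff N) ((Polynomial.derivative Q).eval T * R)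
          = c * (PowerSeries.coeff N) Yb := by
        rw [PowerSeries.coeff_mul]
        rw [Finset.sum_eq_single (0, N)]
        · rw [hRN, hconst]
        · rintro ⟨i, k⟩ hmem hne
          have hik : i + k = N := Finset.HasAntidiagonal.mem_antidiagonal.mp hmem
          have hk : k < N := by
            rcases Nat.lt_or_ge k N with h | h
            · exact h
            · exfalso
              have hkN : k = N := le_antisymm (hik ▸ Nat.le_add_left k i) h
              have hi0 : i = 0 := by omega
              exact hne (by simp [hi0, hkN])
          rw [hRco k hk, mul_zero]
        · intro hmem
          exact absurd (Finset.HasAntidiagonal.mem_antidiagonal.mpr (by simp)) hmem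
      -- the quadratic term vanishes in degree N
      have hR2 : (PowerSeries.coeff N) (kk * R ^ 2) = 0 := by
        have hXR : (PowerSeries.X : K⟦X⟧) ^ N ∣ R := by
          rw [PowerSeries.X_pow_dvd_iff]
          exact hRco
        have hdvd : (PowerSeries.X : K⟦X⟧) ^ (N + 1) ∣ kk * R ^ 2 := by
          refine Dvd.dvd.mul_left ?_ kk
          refine dvd_trans (pow_dvd_pow (PowerSeries.X : K⟦X⟧) (by omega : N + 1 ≤ N + N)) ?_
          rw [pow_add, sq]
          exact mul_dvd_mul hXR hXR
        exact PowerSeries.X_pow_dvd_iff.mp hdvd N (lt_add_one N)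
      -- the recursion
      have hrec : (PowerSeries.coeff N) Yb
          = -(c⁻¹ * (PowerSeries.coeff N) (Q.eval T)) := by
        rw [hmul, hR2, add_zero] at hco
        field_simp
        linear_combination -hco
      -- rescaling
      set ψ : K⟦X⟧ →+* K⟦X⟧ := PowerSeries.rescale t with hψ
      set W : K⟦X⟧ := ψ T with hWdef
      set W' : K⟦X⟧ := PowerSeries.C ((c * (u:K))⁻¹) * W with hW'def
      have hWco : ∀ k, (PowerSeries.coeff k) W = t ^ k * (PowerSeries.coeff k) T := by
        intro k
        rw [hWdef, hψ, PowerSeries.coeff_rescale]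
      have hW'int : ∀ k, IsIntegral ℤ ((PowerSeries.coeff k) W') := by
        intro k
        rw [hW'def, PowerSeries.coeff_C_mul, hWco k, hTco k]
        by_cases hk : k < N
        · rw [if_pos hk, ← mul_assoc]
          exact IH k hk
        · rw [if_neg hk, mul_zero, mul_zero]
          exact isIntegral_zero
      have hW'pow := int_coeff_pow' hW'int
      have hWW' : W = PowerSeries.C (c * (u:K)) * W' := by
        rw [hW'def, ← mul_assoc, ← map_mul, mul_inv_cancel₀ (mul_ne_zero hc huK),
          map_one, one_mul]
      have hWpow : ∀ j k, (PowerSeries.coeff k) (W ^ j)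
          = (c * (u:K)) ^ j * (PowerSeries.coeff k) (W' ^ j) := by
        intro j k
        rw [hWW', mul_pow, ← map_pow, PowerSeries.coeff_C_mul]
      have hres : (PowerSeries.coeff N) (Polynomial.eval₂ ψ W Q)
          = t ^ N * (PowerSeries.coeff N) (Q.eval T) := by
        rw [← PowerSeries.coeff_rescale]
        congr 1
        have h1 : Q.eval T = Polynomial.eval₂ (RingHom.id _) T Q := rfl
        rw [h1, Polynomial.hom_eval₂, RingHom.comp_id]
      have hsum : (PowerSeries.coeff N) (Polynomial.eval₂ ψ W Q)
          = ∑ j ∈ Finset.range (Q.natDegree + 1), ∑ p ∈ Finset.HasAntidiagonal.antidiagonal N,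
              (t ^ p.1 * (P₁.coeff j).coeff p.1)
                * ((c * (u:K)) ^ j * (PowerSeries.coeff p.2) (W' ^ j)) := by
        rw [Polynomial.eval₂_eq_sum_range, map_sum]
        refine Finset.sum_congr rfl fun j _ => ?_
        rw [PowerSeries.coeff_mul]
        refine Finset.sum_congr rfl fun p hp => ?_
        rw [hWpow j p.2]
        congr 1
        rw [hψ, PowerSeries.coeff_rescale]
        congr 1
        rw [hQdef, Polynomial.coeff_map, hφ, Polynomial.coeToPowerSeries.ringHom_apply,
          Polynomial.coeff_coe]
      -- put everything together
      have hval : (c * (u:K))⁻¹ * t ^ N * (PowerSeries.coeff N) Yb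
          = -((c * c * (u:K))⁻¹ * (PowerSeries.coeff N) (Polynomial.eval₂ ψ W Q)) := by
        rw [hrec, hres]
        simp only [mul_inv]
        ring
      rw [hval, hsum]
      refine IsIntegral.neg ?_
      rw [Finset.mul_sum]
      refine (integralClosure ℤ K).sum_mem fun j _ => ?_
      rw [Finset.mul_sum]
      refine (integralClosure ℤ K).sum_mem fun p hp => ?_
      obtain ⟨i, k⟩ := p
      have hik : i + k = N := Finset.HasAntidiagonal.mem_antidiagonal.mp hp
      match j with
      | 0 =>
        by_cases hk0 : k = 0
        · have hi : i = N := by omega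
          have hco1 : (PowerSeries.coeff k) (W' ^ 0) = 1 := by
            rw [pow_zero, PowerSeries.coeff_one, if_pos hk0]
          rw [hco1, hi]
          have hid : (c * c * (u:K))⁻¹ * (t ^ N * (P₁.coeff 0).coeff N
              * ((c * (u:K)) ^ 0 * 1))
              = γ ^ (2 * n) * (u:K) ^ (n + 1) * ((u:K) * (P₁.coeff 0).coeff N) := by
            rw [htdef, hγdef, hN]
            field_simp
            ring
          rw [hid]
          exact ((hγint.pow (2*n)).mul (huint.pow (n+1))).mul (hq 0 N)
        · have hco1 : (PowerSeries.coeff k) (W' ^ 0) = 0 := by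
            rw [pow_zero, PowerSeries.coeff_one, if_neg hk0]
          rw [hco1]
          simpa using isIntegral_zero
      | 1 =>
        by_cases hkN : k = N
        · have hWN : (PowerSeries.coeff k) (W' ^ 1) = 0 := by
            rw [pow_one, hW'def, PowerSeries.coeff_C_mul, hWco, hTco, hkN,
              if_neg (lt_irrefl N), mul_zero, mul_zero]
          rw [hWN]
          simpa using isIntegral_zero
        · have hi : 1 ≤ i := by omega
          obtain ⟨i', rfl⟩ : ∃ i', i = i' + 1 := ⟨i - 1, by omega⟩
          have hid : (c * c * (u:K))⁻¹ * (t ^ (i' + 1) * (P₁.coeff 1).coeff (i' + 1)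
              * ((c * (u:K)) ^ 1 * (PowerSeries.coeff k) (W' ^ 1)))
              = t ^ i' * γ * ((u:K) * ((u:K) * (P₁.coeff 1).coeff (i' + 1)))
                  * (PowerSeries.coeff k) (W' ^ 1) := by
            rw [htdef, hγdef]
            field_simp
            ring
          rw [hid]
          exact (((htint.pow i').mul hγint).mul (huint.mul (hq 1 (i'+1)))).mul (hW'pow 1 k)
      | (j + 2) =>
        have hid : (c * c * (u:K))⁻¹ * (t ^ i * (P₁.coeff (j+2)).coeff i
            * ((c * (u:K)) ^ (j + 2) * (PowerSeries.coeff k) (W' ^ (j+2))))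
            = t ^ i * γ ^ j * ((u:K) * (P₁.coeff (j+2)).coeff i)
                * (PowerSeries.coeff k) (W' ^ (j+2)) := by
          rw [htdef, hγdef]
          field_simp
          ring
        rw [hid]
        exact (((htint.pow i).mul (hγint.pow j)).mul (hq (j+2) i)).mul (hW'pow (j+2) k)
  -- conclude
  have hEn : ∀ n : ℕ, IsIntegral ℤ ((t * (u:K)) ^ (n + 1) * (PowerSeries.coeff n) y) := by
    intro n
    cases n with
    | zero =>
      have hid : (t * (u:K)) ^ (0 + 1) * (PowerSeries.coeff 0) y
          = t * ((u:K) * a₀) := by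
        rw [ha₀]; ring
      rw [hid]
      exact htint.mul hua
    | succ n =>
      have hyY : (PowerSeries.coeff (n+1)) y = (PowerSeries.coeff (n+1)) Yb := by
        rw [hYb, map_sub, PowerSeries.coeff_C, if_neg (Nat.succ_ne_zero n), sub_zero]
      have hid : (t * (u:K)) ^ (n + 1 + 1) * (PowerSeries.coeff (n+1)) Yb
          = ((c * (u:K))⁻¹ * t ^ (n+1) * (PowerSeries.coeff (n+1)) Yb)
              * (γ * (t * (u:K) ^ (n + 1 + 1))) := by
        rw [hγdef]
        field_simp
        ring
      rw [hyY, hid]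
      exact (CL (n+1)).mul (hγint.mul (htint.mul (huint.pow (n+1+1))))
  have hE0 : t * (u:K) ≠ 0 := mul_ne_zero ht0 huK
  obtain ⟨d, hd0, hdE⟩ := exists_den' K {(t * (u:K))⁻¹}
  refine ⟨d, hd0, fun n => ?_⟩
  have hdK : IsIntegral ℤ ((d:K) * (t * (u:K))⁻¹) := hdE _ (Finset.mem_singleton_self _)
  have hid : (d : K) ^ (n + 1) * (PowerSeries.coeff n) y
      = ((d:K) * (t * (u:K))⁻¹) ^ (n + 1)
          * ((t * (u:K)) ^ (n + 1) * (PowerSeries.coeff n) y) := by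
    rw [mul_pow, mul_assoc, ← mul_assoc (((t * (u:K))⁻¹) ^ (n+1)), ← mul_pow,
      inv_mul_cancel₀ hE0, one_pow, one_mul]
  rw [hid]
  exact (hdK.pow (n+1)).mul (hEn n)
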